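/- If C ⊆ V is convex and S ⊊ C is an extremal subset of C, then S does not meet the relative interior of C, i.e., S ∩ ri(C) = ∅. -/

import Mathlib

/-- A proper extremal subset of a convex set misses the relative interior. -/
theorem stmt4 {V : Type*} [NormedAddCommGroup V] [NormedSpace ℝ V]
    [FiniteDimensional ℝ V] (C S : Set V) (hC : Convex ℝ C) (hS : S ⊆ C)
    (hne : S ≠ C)
    (hext : ∀ x ∈ C, ∀ y ∈ C, ∀ t ∈ Set.Ioo (0:ℝ) 1,
      t • x + (1 - t) • y ∈ S → x ∈ S ∧ y ∈ S) :
    S ∩ intrinsicInterior ℝ C = ∅ := by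
  rw [Set.eq_empty_iff_forall_notMem]
  rintro s ⟨hsS, hsri⟩
  apply hne
  refine Set.Subset.antisymm hS fun x hx => ?_
  obtain ⟨z, hz, hzs⟩ := mem_intrinsicInterior.mp hsri
  have hsC : s ∈ C := hS hsS
  have hxE : x ∈ affineSpan ℝ C := subset_affineSpan ℝ C hx
  have hsE : s ∈ affineSpan ℝ C := subset_affineSpan ℝ C hsC
  let f : ℝ → affineSpan ℝ C := fun t => ⟨AffineMap.lineMap x s t, AffineMap.lineMap_mem t hxE hsE⟩
  have hf : Continuous f :=
    Continuous.subtype_mk ((AffineMap.lineMap (k := ℝ) x s).continuous_of_finiteDimensional) _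
  have hf1 : f 1 = z := Subtype.ext (by simp [f, hzs])
  have hmem : f ⁻¹' (interior ((↑) ⁻¹' C : Set (affineSpan ℝ C))) ∈ nhds (1:ℝ) := by
    apply hf.continuousAt.preimage_mem_nhds
    rw [hf1]
    exact isOpen_interior.mem_nhds hz
  obtain ⟨ε, hε, hball⟩ := Metric.mem_nhds_iff.mp hmem
  set δ := ε/2 with hδdef
  have hδ : (0:ℝ) < δ := by positivity
  have hin : f (1 + δ) ∈ interior ((↑) ⁻¹' C : Set (affineSpan ℝ C)) := by
    apply hball
    simp only [Metric.mem_ball, Real.dist_eq]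
    rw [show (1 + δ - 1) = δ by ring, abs_of_pos hδ]
    linarith
  have hyC : (AffineMap.lineMap x s (1+δ) : V) ∈ C := by
    have := interior_subset hin
    simpa [f] using this
  set y := (AffineMap.lineMap x s (1+δ) : V) with hydef
  have h1δ : (0:ℝ) < 1 + δ := by linarith
  have ht : (1/(1+δ)) ∈ Set.Ioo (0:ℝ) 1 := by
    constructor
    · positivity
    · rw [div_lt_one h1δ]; linarith
  have hkey : (1/(1+δ)) • y + (1 - 1/(1+δ)) • x = s := by
    rw [hydef, AffineMap.lineMap_apply_module]
    match_scalars <;> field_simp <;> ring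
  exact (hext y hyC x hx _ ht (hkey ▸ hsS)).2
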